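/- Let F be a free group and T the Bass–Serre tree of the HNN extension F = ⟨a⟩*_φ with stable letter b acting over the vertex group ⟨a⟩ in F₂ = ⟨a,b⟩ (edge length 3, trivially stabilized edges). Let T_k be the simplicial F₂-tree dual to the splitting F₂ = ⟨a^k b⟩ * ⟨a⟩ with loop length 1 and edge length 1 as described. Then for the conjugacy classes g_k = a^k b one has ℓ_{T_k}(g_k) = 1 while ℓ_{T_k}(g_{k+1}) = 3 for all k; consequently there is no continuous pairing ⟨·,·⟩ on pairs (tree, relative current) extending ⟨T, η_g⟩ = ℓ_T(g) that is continuous in both variables simultaneously along the sequences T_k → T and η_{g_k} → η_∞. -/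

import Mathlib

namespace Stmt17

/-- The free group `F₂ = ⟨a, b⟩`. -/
abbrev F2 := FreeGroup Bool

/-- The generator `a`. -/
def a : F2 := FreeGroup.of false

/-- The generator `b`. -/
def b : F2 := FreeGroup.of true

/-- The peripheral subgroup `⟨a⟩`. -/
def A : Subgroup F2 := Subgroup.zpowers a

/-- `c k = a^k * b`, the label of the loop of the graph of groups defining `T_k`. -/
def c (k : ℕ) : F2 := a ^ k * b

lemma c_ne_one (k : ℕ) : c k ≠ 1 := by
  intro h
  have h2 := congrArg (FreeGroup.lift (fun t : Bool => if t then Multiplicative.ofAdd (1 : ℤ) else 1)) h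
  simp [c, a, b] at h2

/-- Vertices of the Bass–Serre tree `T_k`: the orbit `F₂` of the loop vertex
(trivial stabilizer) and the orbit `F₂/⟨a⟩` of the vertex with stabilizer `⟨a⟩`. -/
abbrev V := F2 ⊕ (F2 ⧸ A)

instance : SMul F2 V :=
  ⟨fun g v => match v with
    | Sum.inl h => Sum.inl (g * h)
    | Sum.inr q => Sum.inr (g • q)⟩

instance : MulAction F2 V where
  one_smul v := by
    cases v with
    | inl h => show Sum.inl ((1 : F2) * h) = Sum.inl h; rw [one_mul]
    | inr q => show Sum.inr ((1 : F2) • q) = Sum.inr q; rw [one_smul]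
  mul_smul g h v := by
    cases v with
    | inl x => show Sum.inl (g * h * x) = Sum.inl (g * (h * x)); rw [mul_assoc]
    | inr q => show Sum.inr ((g * h) • q) = Sum.inr (g • h • q); rw [mul_smul]

/-- The Bass–Serre tree `T_k` of the splitting `F₂ = ⟨a⟩ * ⟨a^k b⟩`, realized as the
graph of groups with two vertices joined by an edge (of length 1), vertex group
`⟨a⟩` at one vertex and a loop (of length 1) labeled `a^k b` at the other:
`Sum.inl g` is joined to `Sum.inl (g * c k)` (lifts of the loop) and `Sum.inl g` is
joined to `Sum.inr ⟦g⟧` (lifts of the edge). -/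
def Tk (k : ℕ) : SimpleGraph V where
  Adj x y :=
    match x, y with
    | Sum.inl g, Sum.inl h => g⁻¹ * h = c k ∨ h⁻¹ * g = c k
    | Sum.inl g, Sum.inr q => (QuotientGroup.mk g : F2 ⧸ A) = q
    | Sum.inr q, Sum.inl g => (QuotientGroup.mk g : F2 ⧸ A) = q
    | Sum.inr _, Sum.inr _ => False
  symm := by
    constructor
    intro x y hxy
    cases x <;> cases y <;> simp_all <;> tauto
  loopless := by
    constructor
    intro x hx
    cases x with
    | inl g =>
        rcases hx with h | h <;>
        · simp only [inv_mul_cancel] at h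
          exact c_ne_one k h.symm
    | inr q => exact hx

/-- The translation length of `g` on the simplicial tree `T_k`, with all edges of
length 1, computed via the graph metric. -/
noncomputable def transLen (k : ℕ) (g : F2) : ℕ :=
  ⨅ v : V, (Tk k).dist v (g • v)

/-! ### Auxiliary machinery -/

/-- The `b`-exponent sum. -/
def eB : F2 → ℤ := fun x =>
  ((FreeGroup.lift (fun t : Bool => Multiplicative.ofAdd (if t then (1:ℤ) else 0))) x).toAdd

/-- The `a`-exponent sum. -/
def eA : F2 → ℤ := fun x =>
  ((FreeGroup.lift (fun t : Bool => Multiplicative.ofAdd (if t then (0:ℤ) else 1))) x).toAdd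

@[simp] lemma eB_mul (x y : F2) : eB (x*y) = eB x + eB y := by simp [eB]
@[simp] lemma eB_inv (x : F2) : eB x⁻¹ = - eB x := by simp [eB]
@[simp] lemma eB_zpow (x : F2) (n : ℤ) : eB (x ^ n) = n * eB x := by simp [eB]
@[simp] lemma eB_pow (x : F2) (n : ℕ) : eB (x ^ n) = n * eB x := by simp [eB]
@[simp] lemma eB_a : eB a = 0 := by simp [eB, a]
@[simp] lemma eB_b : eB b = 1 := by simp [eB, b]
@[simp] lemma eB_one : eB 1 = 0 := by simp [eB]
@[simp] lemma eB_c (k : ℕ) : eB (c k) = 1 := by simp [c]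

@[simp] lemma eA_mul (x y : F2) : eA (x*y) = eA x + eA y := by simp [eA]
@[simp] lemma eA_inv (x : F2) : eA x⁻¹ = - eA x := by simp [eA]
@[simp] lemma eA_zpow (x : F2) (n : ℤ) : eA (x ^ n) = n * eA x := by simp [eA]
@[simp] lemma eA_pow (x : F2) (n : ℕ) : eA (x ^ n) = n * eA x := by simp [eA]
@[simp] lemma eA_a : eA a = 1 := by simp [eA, a]
@[simp] lemma eA_b : eA b = 0 := by simp [eA, b]
@[simp] lemma eA_one : eA 1 = 0 := by simp [eA]
@[simp] lemma eA_c (k : ℕ) : eA (c k) = k := by simp [c]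

lemma mem_A_iff (x : F2) : x ∈ A ↔ ∃ n : ℤ, a ^ n = x := Subgroup.mem_zpowers_iff

lemma mk_mul_eq_smul (g x : F2) :
    (QuotientGroup.mk (g * x) : F2 ⧸ A) = g • (QuotientGroup.mk x : F2 ⧸ A) := by
  rw [MulAction.Quotient.smul_mk]; rfl

@[simp] lemma smul_inl (g h : F2) : (g • (Sum.inl h : V)) = Sum.inl (g * h) := rfl
@[simp] lemma smul_inr (g : F2) (q : F2 ⧸ A) : (g • (Sum.inr q : V)) = Sum.inr (g • q) := rfl

lemma adj_inl_inl {k : ℕ} {g h : F2} :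
    (Tk k).Adj (Sum.inl g) (Sum.inl h) ↔ (g⁻¹ * h = c k ∨ h⁻¹ * g = c k) := Iff.rfl
lemma adj_inl_inr {k : ℕ} {g : F2} {q : F2 ⧸ A} :
    (Tk k).Adj (Sum.inl g) (Sum.inr q) ↔ (QuotientGroup.mk g : F2 ⧸ A) = q := Iff.rfl
lemma adj_inr_inl {k : ℕ} {g : F2} {q : F2 ⧸ A} :
    (Tk k).Adj (Sum.inr q) (Sum.inl g) ↔ (QuotientGroup.mk g : F2 ⧸ A) = q := Iff.rfl
lemma adj_inr_inr {k : ℕ} {q q' : F2 ⧸ A} :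
    ¬ (Tk k).Adj (Sum.inr q) (Sum.inr q') := fun h => h

/-- Left translation as a graph homomorphism. -/
def smulHom (k : ℕ) (g : F2) : Tk k →g Tk k where
  toFun v := g • v
  map_rel' := by
    intro v w hvw
    cases v with
    | inl x =>
      cases w with
      | inl y =>
        rcases hvw with h | h
        · exact Or.inl (by rw [← h]; group)
        · exact Or.inr (by rw [← h]; group)
      | inr q =>
        show (Tk k).Adj (Sum.inl (g * x)) (Sum.inr (g • q))
        rw [adj_inl_inr] at hvw ⊢
        rw [← hvw, mk_mul_eq_smul]
    | inr q =>
      cases w with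
      | inl y =>
        show (Tk k).Adj (Sum.inr (g • q)) (Sum.inl (g * y))
        rw [adj_inr_inl] at hvw ⊢
        rw [← hvw, mk_mul_eq_smul]
      | inr q' => exact absurd hvw (adj_inr_inr)

lemma reach_smul {k : ℕ} (g : F2) {v w : V} (h : (Tk k).Reachable v w) :
    (Tk k).Reachable (g • v) (g • w) := h.map (smulHom k g)

/-- Every `Sum.inl w` is reachable from `Sum.inl 1`. -/
lemma reach_one (k : ℕ) (w : F2) : (Tk k).Reachable (Sum.inl 1) (Sum.inl w) := by
  let S : Subgroup F2 :=
    { carrier := {w | (Tk k).Reachable (Sum.inl 1) (Sum.inl w)}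
      one_mem' := SimpleGraph.Reachable.refl _
      mul_mem' := by
        intro x y hx hy
        refine hx.trans ?_
        have := reach_smul (k := k) x hy
        simpa using this
      inv_mem' := by
        intro x hx
        have := reach_smul (k := k) x⁻¹ hx
        simp only [smul_inl, mul_one, inv_mul_cancel] at this
        exact this.symm }
  have ha : a ∈ S := by
    have h1 : (Tk k).Adj (Sum.inl 1) (Sum.inr (QuotientGroup.mk 1)) := rfl
    have h2 : (Tk k).Adj (Sum.inr (QuotientGroup.mk (1:F2))) (Sum.inl a) := by
      rw [adj_inr_inl]
      refine (QuotientGroup.eq).2 ?_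
      rw [mem_A_iff]
      exact ⟨-1, by simp⟩
    exact h1.reachable.trans h2.reachable
  have hc : c k ∈ S := by
    refine SimpleGraph.Adj.reachable ?_
    rw [adj_inl_inl]
    exact Or.inl (by simp)
  have hb : b ∈ S := by
    have := S.mul_mem (S.inv_mem (S.pow_mem ha k)) hc
    have hcb : (a ^ k)⁻¹ * c k = b := by rw [c]; group
    rwa [hcb] at this
  have : ∀ x : F2, x ∈ S := by
    intro x
    induction x using FreeGroup.induction_on with
    | C1 => exact S.one_mem
    | of t => cases t with
      | false => exact ha
      | true => exact hb
    | inv_of t ht => exact S.inv_mem ht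
    | mul x y hxx hyy => exact S.mul_mem hxx hyy
  exact this w

lemma reach_self_smul {k : ℕ} (g : F2) (v : V) : (Tk k).Reachable v (g • v) := by
  cases v with
  | inl h =>
    have := reach_smul (k := k) h (reach_one k (h⁻¹ * g * h))
    simp only [smul_inl, mul_one] at this
    have he : h * (h⁻¹ * g * h) = g * h := by group
    rw [he] at this
    exact this
  | inr q =>
    have hq : (QuotientGroup.mk q.out : F2 ⧸ A) = q := QuotientGroup.out_eq' q
    have h1 : (Tk k).Adj (Sum.inr q) (Sum.inl q.out) := hq
    have h2 : (Tk k).Reachable (Sum.inl q.out) (Sum.inl (g * q.out)) := by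
      have := reach_smul (k := k) q.out (reach_one k (q.out⁻¹ * g * q.out))
      simp only [smul_inl, mul_one] at this
      have he : q.out * (q.out⁻¹ * g * q.out) = g * q.out := by group
      rwa [he] at this
    have h3 : (Tk k).Adj (Sum.inl (g * q.out)) (Sum.inr (g • q)) := by
      rw [adj_inl_inr, mk_mul_eq_smul, hq]
    exact (h1.reachable.trans h2).trans h3.reachable

/-- No fixed vertices for elements with nonzero `b`-exponent. -/
lemma no_fix {g : F2} (hg : eB g ≠ 0) (v : V) : g • v ≠ v := by
  cases v with
  | inl h =>
    intro he
    rw [smul_inl, Sum.inl.injEq] at he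
    have := congrArg eB he
    simp at this
    exact hg this
  | inr q =>
    intro he
    rw [smul_inr, Sum.inr.injEq] at he
    have he' : (QuotientGroup.mk (g * q.out) : F2 ⧸ A) = QuotientGroup.mk q.out := by
      rw [mk_mul_eq_smul, QuotientGroup.out_eq' q, he]
    rw [QuotientGroup.eq, mem_A_iff] at he'
    obtain ⟨n, hn⟩ := he'
    have h2 := congrArg eB hn
    simp only [eB_mul, eB_inv, eB_zpow, eB_a, eB_one] at h2
    omega

/-- `a * c k` moves every vertex by distance at least 3. -/
lemma three_le_walk {k : ℕ} {v : V} (p : (Tk k).Walk v ((a * c k) • v)) : 3 ≤ p.length := by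
  by_contra hlt
  push_neg at hlt
  have h0 := p.getVert_zero
  have hL := p.getVert_length
  have hcase : p.length = 0 ∨ p.length = 1 ∨ p.length = 2 := by omega
  have heB : eB (a * c k) = 1 := by simp
  rcases hcase with h | h | h
  · -- length 0 : fixed vertex
    rw [h] at hL; rw [h0] at hL
    exact no_fix (g := a * c k) (by simp) v hL.symm
  · -- length 1 : v adjacent to (a*c k) • v
    have hadj := p.adj_getVert_succ (i := 0) (by omega)
    rw [h0] at hadj
    rw [h] at hL
    rw [hL] at hadj
    cases v with
    | inl x =>
      rw [smul_inl, adj_inl_inl] at hadj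
      rcases hadj with he | he
      · have h1 := congrArg eA he
        simp only [eA_mul, eA_inv, eA_a, eA_c] at h1
        omega
      · have h2 := congrArg eB he
        simp only [eB_mul, eB_inv, eB_a, eB_c] at h2
        omega
    | inr q => exact adj_inr_inr hadj
  · -- length 2
    have hadj1 := p.adj_getVert_succ (i := 0) (by omega)
    have hadj2 := p.adj_getVert_succ (i := 1) (by omega)
    rw [h0] at hadj1
    rw [h] at hL
    rw [show (1:ℕ) + 1 = 2 from rfl, hL] at hadj2
    cases v with
    | inl x =>
      simp only [smul_inl] at hadj2
      cases hw : p.getVert 1 with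
      | inl m =>
        rw [hw] at hadj1 hadj2
        rw [adj_inl_inl] at hadj1 hadj2
        have k1 : eB m = eB x + 1 ∨ eB m = eB x - 1 := by
          rcases hadj1 with he | he
          · left; have h1 := congrArg eB he
            simp only [eB_mul, eB_inv, eB_c] at h1; omega
          · right; have h1 := congrArg eB he
            simp only [eB_mul, eB_inv, eB_c] at h1; omega
        have k2 : eB x + 1 = eB m + 1 ∨ eB x + 1 = eB m - 1 := by
          rcases hadj2 with he | he
          · left; have h1 := congrArg eB he
            simp only [eB_mul, eB_inv, eB_c, eB_a] at h1; omega
          · right; have h1 := congrArg eB he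
            simp only [eB_mul, eB_inv, eB_c, eB_a] at h1; omega
        omega
      | inr q =>
        rw [hw] at hadj1 hadj2
        rw [adj_inl_inr] at hadj1
        rw [adj_inr_inl] at hadj2
        rw [← hadj1, QuotientGroup.eq, mem_A_iff] at hadj2
        obtain ⟨n, hn⟩ := hadj2
        have h1 := congrArg eB hn
        simp only [eB_mul, eB_inv, eB_zpow, eB_a, eB_c] at h1
        omega
    | inr q =>
      simp only [smul_inr] at hadj2
      cases hw : p.getVert 1 with
      | inl m =>
        rw [hw] at hadj1 hadj2
        rw [adj_inr_inl] at hadj1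
        rw [adj_inl_inr] at hadj2
        have : ((a * c k) • (Sum.inr q : V)) = Sum.inr q := by
          rw [smul_inr, Sum.inr.injEq]
          exact hadj2.symm.trans hadj1
        exact no_fix (g := a * c k) (by simp) _ this
      | inr q' =>
        rw [hw] at hadj1
        exact adj_inr_inr hadj1

/-- In the tree `T_k` dual to the splitting
`F₂ = ⟨a⟩ * ⟨a^k b⟩` (unit edge lengths), the conjugacy class `g_k = a^k b` has
translation length `ℓ_{T_k}(g_k) = 1`, while `ℓ_{T_k}(g_{k+1}) = ℓ_{T_k}(a^{k+1} b) = 3`.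
Consequently the naive length pairing `⟨T, η_g⟩ = ℓ_T(g)` admits no extension
continuous in both variables along `T_k → T`, `η_{g_k} → η_∞`. -/
theorem translation_length_discontinuity (k : ℕ) :
    transLen k (c k) = 1 ∧ transLen k (a * c k) = 3 := by
  constructor
  · apply le_antisymm
    · -- dist at Sum.inl 1 is ≤ 1
      refine le_trans (ciInf_le (OrderBot.bddBelow _) (Sum.inl (1:F2))) ?_
      have hadj : (Tk k).Adj (Sum.inl (1:F2)) ((c k) • (Sum.inl (1:F2))) := by
        rw [smul_inl, mul_one, adj_inl_inl]
        exact Or.inl (by simp)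
      exact SimpleGraph.dist_le hadj.toWalk
    · refine le_ciInf fun v => ?_
      have hr : (Tk k).Reachable v ((c k) • v) := reach_self_smul _ _
      have hne : v ≠ (c k) • v := (no_fix (g := c k) (by simp) v).symm
      exact hr.pos_dist_of_ne hne
  · apply le_antisymm
    · refine le_trans (ciInf_le (OrderBot.bddBelow _) (Sum.inl (1:F2))) ?_
      have e1 : (Tk k).Adj (Sum.inl (1:F2)) (Sum.inr (QuotientGroup.mk 1)) := rfl
      have e2 : (Tk k).Adj (Sum.inr (QuotientGroup.mk (1:F2))) (Sum.inl a) := by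
        rw [adj_inr_inl]
        exact (QuotientGroup.eq).2 ((mem_A_iff _).2 ⟨-1, by simp⟩)
      have e3 : (Tk k).Adj (Sum.inl a) ((a * c k) • (Sum.inl (1:F2))) := by
        rw [smul_inl, mul_one, adj_inl_inl]
        exact Or.inl (by group)
      calc (Tk k).dist (Sum.inl (1:F2)) ((a * c k) • (Sum.inl (1:F2)))
          ≤ (SimpleGraph.Walk.cons e1
              (SimpleGraph.Walk.cons e2 (SimpleGraph.Walk.cons e3 SimpleGraph.Walk.nil))).length :=
            SimpleGraph.dist_le _
        _ = 3 := by simp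
    · refine le_ciInf fun v => ?_
      have hr : (Tk k).Reachable v ((a * c k) • v) := reach_self_smul _ _
      obtain ⟨p, hp⟩ := hr.exists_walk_length_eq_dist
      rw [← hp]
      exact three_le_walk p

end Stmt17
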